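/- For all integers m ≥ 1 and t ≥ 0, every vertex of the Koch network K_{m,t} of degree k has local clustering coefficient exactly 1/(k-1); that is, the number of edges among its k neighbors equals k/2, so that (k/2) divided by k(k-1)/2 equals 1/(k-1). -/

import Mathlib

/-- The triangles of the Koch network `K_{m,t}`: at step `t+1`, each old triangle survives and
each (triangle, corner, group) creates a new triangle. -/
def KochTri (m : ℕ) : ℕ → Type
  | 0 => Unit
  | t+1 => KochTri m t ⊕ (KochTri m t × Fin 3 × Fin m)

/-- The vertices of the Koch network `K_{m,t}`: at step `t+1`, each (triangle, corner, group)
creates two new vertices. -/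
def KochVertex (m : ℕ) : ℕ → Type
  | 0 => Fin 3
  | t+1 => KochVertex m t ⊕ (KochTri m t × Fin 3 × Fin m × Fin 2)

/-- The three corner vertices of each triangle. -/
def KochCorner (m : ℕ) : ∀ t, KochTri m t → Fin 3 → KochVertex m t
  | 0, _, i => i
  | t+1, Sum.inl τ, i => Sum.inl (KochCorner m t τ i)
  | t+1, Sum.inr (τ, c, g), i =>
      ![Sum.inl (KochCorner m t τ c), Sum.inr (τ, c, g, 0), Sum.inr (τ, c, g, 1)] i

instance KochTri.instDecidableEq (m : ℕ) : ∀ t, DecidableEq (KochTri m t)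
  | 0 => inferInstanceAs (DecidableEq Unit)
  | t+1 =>
    letI := KochTri.instDecidableEq m t
    inferInstanceAs (DecidableEq (KochTri m t ⊕ (KochTri m t × Fin 3 × Fin m)))

instance KochVertex.instDecidableEq (m : ℕ) : ∀ t, DecidableEq (KochVertex m t)
  | 0 => inferInstanceAs (DecidableEq (Fin 3))
  | t+1 =>
    letI := KochVertex.instDecidableEq m t
    letI := KochTri.instDecidableEq m t
    inferInstanceAs (DecidableEq (KochVertex m t ⊕ (KochTri m t × Fin 3 × Fin m × Fin 2)))

instance KochTri.instFintype (m : ℕ) : ∀ t, Fintype (KochTri m t)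
  | 0 => inferInstanceAs (Fintype Unit)
  | t+1 =>
    letI := KochTri.instFintype m t
    inferInstanceAs (Fintype (KochTri m t ⊕ (KochTri m t × Fin 3 × Fin m)))

instance KochVertex.instFintype (m : ℕ) : ∀ t, Fintype (KochVertex m t)
  | 0 => inferInstanceAs (Fintype (Fin 3))
  | t+1 =>
    letI := KochVertex.instFintype m t
    letI := KochTri.instFintype m t
    inferInstanceAs (Fintype (KochVertex m t ⊕ (KochTri m t × Fin 3 × Fin m × Fin 2)))

/-- The Koch network `K_{m,t}`: two distinct vertices are adjacent iff they are corners of a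
common triangle. -/
def KochGraph (m t : ℕ) : SimpleGraph (KochVertex m t) where
  Adj u v := u ≠ v ∧ ∃ (τ : KochTri m t) (i j : Fin 3),
      KochCorner m t τ i = u ∧ KochCorner m t τ j = v
  symm := ⟨by rintro u v ⟨hne, τ, i, j, hi, hj⟩; exact ⟨hne.symm, τ, j, i, hj, hi⟩⟩
  loopless := ⟨by rintro u ⟨hne, -⟩; exact hne rfl⟩

instance (m t : ℕ) : DecidableRel (KochGraph m t).Adj := fun u v =>
  inferInstanceAs (Decidable (u ≠ v ∧ ∃ (τ : KochTri m t) (i j : Fin 3),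
      KochCorner m t τ i = u ∧ KochCorner m t τ j = v))

/-- The step at which a vertex of `K_{m,t}` was added (initial vertices are added at step 0). -/
def KochBirth (m : ℕ) : ∀ t, KochVertex m t → ℕ
  | 0, _ => 0
  | t+1, Sum.inl v => KochBirth m t v
  | t+1, Sum.inr _ => t+1

/-- The canonical inclusion of `K_{m,t}` into `K_{m,t+1}`. -/
def KochInl (m t : ℕ) (v : KochVertex m t) : KochVertex m (t+1) := Sum.inl v

/-- The other member of the group of two with which a (non-initial) vertex was added. -/
def KochSibling (m : ℕ) : ∀ t, KochVertex m t → KochVertex m t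
  | 0, v => v
  | t+1, Sum.inl v => Sum.inl (KochSibling m t v)
  | t+1, Sum.inr (τ, c, g, p) => Sum.inr (τ, c, g, if p = 0 then 1 else 0)

/-- The father vertex of a (non-initial) vertex: the existing vertex to which its group of two
was attached. -/
def KochFather (m : ℕ) : ∀ t, KochVertex m t → KochVertex m t
  | 0, v => v
  | t+1, Sum.inl v => Sum.inl (KochFather m t v)
  | t+1, Sum.inr (τ, c, _, _) => Sum.inl (KochCorner m t τ c)

attribute [reducible] KochVertex KochTri

def kcnt (m t : ℕ) (v : KochVertex m t) : ℕ :=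
  (Finset.univ.filter fun q : KochTri m t × Fin 3 => KochCorner m t q.1 q.2 = v).card

def dcnt (m t : ℕ) (v : KochVertex m t) : ℕ :=
  (Finset.univ.filter fun q : KochVertex m t × KochVertex m t =>
    (KochGraph m t).Adj v q.1 ∧ (KochGraph m t).Adj v q.2 ∧ (KochGraph m t).Adj q.1 q.2).card

lemma corner_inr0 (m t : ℕ) (τ : KochTri m t) (c : Fin 3) (g : Fin m) :
    KochCorner m (t+1) (Sum.inr (τ,c,g)) 0 = Sum.inl (KochCorner m t τ c) := rfl
lemma corner_inr1 (m t : ℕ) (τ : KochTri m t) (c : Fin 3) (g : Fin m) :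
    KochCorner m (t+1) (Sum.inr (τ,c,g)) 1 = Sum.inr (τ,c,g,0) := rfl
lemma corner_inr2 (m t : ℕ) (τ : KochTri m t) (c : Fin 3) (g : Fin m) :
    KochCorner m (t+1) (Sum.inr (τ,c,g)) 2 = Sum.inr (τ,c,g,1) := rfl
lemma corner_inl' (m t : ℕ) (τ : KochTri m t) (i : Fin 3) :
    KochCorner m (t+1) (Sum.inl τ) i = Sum.inl (KochCorner m t τ i) := rfl

lemma adj0 (m : ℕ) (u w : KochVertex m 0) : (KochGraph m 0).Adj u w ↔ u ≠ w := by
  constructor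
  · exact fun h => h.1
  · exact fun h => ⟨h, (), u, w, rfl, rfl⟩

lemma card0 (m : ℕ) : Fintype.card (KochVertex m 0) = 3 := Fintype.card_fin 3

lemma deg0 (m : ℕ) (v : KochVertex m 0) : (KochGraph m 0).degree v = 2 := by
  rw [SimpleGraph.degree, SimpleGraph.neighborFinset_eq_filter]
  rw [Finset.filter_congr (fun w _ => by rw [adj0]), Finset.filter_ne,
    Finset.card_erase_of_mem (Finset.mem_univ v), Finset.card_univ, card0]

lemma kcnt0 (m : ℕ) (v : KochVertex m 0) : kcnt m 0 v = 1 := by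
  rw [kcnt]
  erw [show (Finset.univ.filter fun q : KochTri m 0 × Fin 3 => KochCorner m 0 q.1 q.2 = v)
      = {((), v)} by
    ext q
    simp only [Finset.mem_filter, Finset.mem_univ, true_and, Finset.mem_singleton]
    constructor
    · intro h; exact Prod.ext (Subsingleton.elim _ _) h
    · intro h; rw [h]; rfl]
  exact Finset.card_singleton _

lemma dcnt0 (m : ℕ) (v : KochVertex m 0) : dcnt m 0 v = 2 := by
  rw [dcnt]
  erw [show (Finset.univ.filter fun q : KochVertex m 0 × KochVertex m 0 =>
      (KochGraph m 0).Adj v q.1 ∧ (KochGraph m 0).Adj v q.2 ∧ (KochGraph m 0).Adj q.1 q.2)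
      = (Finset.univ.filter fun q => v ≠ q.1 ∧ v ≠ q.2 ∧ q.1 ≠ q.2) by
    ext q; simp [adj0]]
  have key : ∀ w : Fin 3, (Finset.univ.filter fun q : Fin 3 × Fin 3 =>
      w ≠ q.1 ∧ w ≠ q.2 ∧ q.1 ≠ q.2).card = 2 := by decide
  exact key v

lemma fin3_cases (i : Fin 3) : i = 0 ∨ i = 1 ∨ i = 2 := by revert i; decide
lemma fin2_cases (p : Fin 2) : p = 0 ∨ p = 1 := by revert p; decide

lemma vinl_injEq (m t : ℕ) (x y : KochVertex m t) :
    (Sum.inl x : KochVertex m (t+1)) = Sum.inl y ↔ x = y :=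
  ⟨fun h => Sum.inl.inj h, fun h => congrArg Sum.inl h⟩

lemma vinr_injEq (m t : ℕ) (b b' : KochTri m t × Fin 3 × Fin m × Fin 2) :
    (Sum.inr b : KochVertex m (t+1)) = Sum.inr b' ↔ b = b' :=
  ⟨fun h => Sum.inr.inj h, fun h => congrArg Sum.inr h⟩

lemma vinl_ne_vinr (m t : ℕ) (x : KochVertex m t) (b : KochTri m t × Fin 3 × Fin m × Fin 2) :
    (Sum.inl x : KochVertex m (t+1)) ≠ Sum.inr b := fun h => Sum.inl_ne_inr h

lemma corner_inr_eq_inl (m t : ℕ) (τ : KochTri m t) (c : Fin 3) (g : Fin m) (i : Fin 3)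
    (a : KochVertex m t) :
    KochCorner m (t+1) (Sum.inr (τ,c,g)) i = Sum.inl a ↔ i = 0 ∧ KochCorner m t τ c = a := by
  obtain rfl | rfl | rfl := fin3_cases i
  · rw [corner_inr0]
    exact ⟨fun h => ⟨rfl, Sum.inl.inj h⟩, fun h => congrArg Sum.inl h.2⟩
  · rw [corner_inr1]
    exact ⟨fun h => absurd h.symm (vinl_ne_vinr _ _ _ _), fun h => absurd h.1 (by decide)⟩
  · rw [corner_inr2]
    exact ⟨fun h => absurd h.symm (vinl_ne_vinr _ _ _ _), fun h => absurd h.1 (by decide)⟩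

lemma corner_inr_eq_inr (m t : ℕ) (τ : KochTri m t) (c : Fin 3) (g : Fin m) (i : Fin 3)
    (τ' : KochTri m t) (c' : Fin 3) (g' : Fin m) (p : Fin 2) :
    KochCorner m (t+1) (Sum.inr (τ,c,g)) i = Sum.inr (τ',c',g',p) ↔
      τ = τ' ∧ c = c' ∧ g = g' ∧ ((i = 1 ∧ p = 0) ∨ (i = 2 ∧ p = 1)) := by
  obtain rfl | rfl | rfl := fin3_cases i
  · rw [corner_inr0]
    constructor
    · intro h; exact absurd h (vinl_ne_vinr _ _ _ _)
    · rintro ⟨-, -, -, (⟨h, -⟩ | ⟨h, -⟩)⟩ <;> exact absurd h (by decide)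
  · rw [corner_inr1]
    constructor
    · intro h
      obtain ⟨rfl, rfl, rfl, rfl⟩ : τ = τ' ∧ c = c' ∧ g = g' ∧ (0 : Fin 2) = p := by
        simpa using Sum.inr.inj h
      exact ⟨rfl, rfl, rfl, Or.inl ⟨rfl, rfl⟩⟩
    · rintro ⟨rfl, rfl, rfl, (⟨-, rfl⟩ | ⟨h, -⟩)⟩
      · rfl
      · exact absurd h (by decide)
  · rw [corner_inr2]
    constructor
    · intro h
      obtain ⟨rfl, rfl, rfl, rfl⟩ : τ = τ' ∧ c = c' ∧ g = g' ∧ (1 : Fin 2) = p := by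
        simpa using Sum.inr.inj h
      exact ⟨rfl, rfl, rfl, Or.inr ⟨rfl, rfl⟩⟩
    · rintro ⟨rfl, rfl, rfl, (⟨h, -⟩ | ⟨-, rfl⟩)⟩
      · exact absurd h (by decide)
      · rfl

lemma adj_inl_inl (m t : ℕ) (a b : KochVertex m t) :
    (KochGraph m (t+1)).Adj (Sum.inl a) (Sum.inl b) ↔ (KochGraph m t).Adj a b := by
  constructor
  · rintro ⟨hne, τ', i, j, hi, hj⟩
    match τ' with
    | Sum.inl τ =>
      rw [corner_inl'] at hi hj
      exact ⟨fun h => hne (by rw [h]), τ, i, j, Sum.inl.inj hi, Sum.inl.inj hj⟩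
    | Sum.inr (τ, c, g) =>
      rw [corner_inr_eq_inl] at hi hj
      exact absurd (by rw [← hi.2, ← hj.2]) hne
  · rintro ⟨hne, τ, i, j, hi, hj⟩
    exact ⟨fun h => hne (Sum.inl.inj h), Sum.inl τ, i, j, by rw [corner_inl', hi],
      by rw [corner_inl', hj]⟩

lemma adj_inl_inr (m t : ℕ) (a : KochVertex m t) (τ : KochTri m t) (c : Fin 3) (g : Fin m)
    (p : Fin 2) :
    (KochGraph m (t+1)).Adj (Sum.inl a) (Sum.inr (τ,c,g,p)) ↔ a = KochCorner m t τ c := by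
  constructor
  · rintro ⟨hne, τ', i, j, hi, hj⟩
    match τ' with
    | Sum.inl τ0 =>
      rw [corner_inl'] at hj
      exact absurd hj (vinl_ne_vinr _ _ _ _)
    | Sum.inr (τ0, c0, g0) =>
      rw [corner_inr_eq_inl] at hi
      rw [corner_inr_eq_inr] at hj
      obtain ⟨rfl, rfl, rfl, -⟩ := hj
      exact hi.2.symm
  · rintro rfl
    refine ⟨vinl_ne_vinr _ _ _ _, Sum.inr (τ, c, g), 0, if p = 0 then 1 else 2, corner_inr0 .., ?_⟩
    rw [corner_inr_eq_inr]
    obtain rfl | rfl := fin2_cases p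
    · exact ⟨rfl, rfl, rfl, Or.inl ⟨by rw [if_pos rfl], rfl⟩⟩
    · exact ⟨rfl, rfl, rfl, Or.inr ⟨by rw [if_neg (by decide)], rfl⟩⟩

lemma adj_inr_inl (m t : ℕ) (a : KochVertex m t) (τ : KochTri m t) (c : Fin 3) (g : Fin m)
    (p : Fin 2) :
    (KochGraph m (t+1)).Adj (Sum.inr (τ,c,g,p)) (Sum.inl a) ↔ a = KochCorner m t τ c := by
  exact ((KochGraph m (t+1)).adj_comm _ _).trans (adj_inl_inr m t a τ c g p)

lemma adj_inr_inr (m t : ℕ) (τ τ' : KochTri m t) (c c' : Fin 3) (g g' : Fin m) (p p' : Fin 2) :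
    (KochGraph m (t+1)).Adj (Sum.inr (τ,c,g,p)) (Sum.inr (τ',c',g',p')) ↔
      τ = τ' ∧ c = c' ∧ g = g' ∧ p ≠ p' := by
  constructor
  · rintro ⟨hne, σ, i, j, hi, hj⟩
    match σ with
    | Sum.inl τ0 =>
      rw [corner_inl'] at hi
      exact absurd hi (vinl_ne_vinr _ _ _ _)
    | Sum.inr (τ0, c0, g0) =>
      rw [corner_inr_eq_inr] at hi hj
      obtain ⟨rfl, rfl, rfl, -⟩ := hi
      obtain ⟨rfl, rfl, rfl, -⟩ := hj
      refine ⟨rfl, rfl, rfl, fun hpp => hne ?_⟩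
      rw [hpp]
  · rintro ⟨rfl, rfl, rfl, hpp⟩
    refine ⟨fun hh => hpp ?_, Sum.inr (τ, c, g), if p = 0 then 1 else 2,
      if p' = 0 then 1 else 2, ?_, ?_⟩
    · have h3 : τ = τ ∧ c = c ∧ g = g ∧ p = p' := by simpa using Sum.inr.inj hh
      exact h3.2.2.2
    · rw [corner_inr_eq_inr]
      obtain rfl | rfl := fin2_cases p
      · exact ⟨rfl, rfl, rfl, Or.inl ⟨by rw [if_pos rfl], rfl⟩⟩
      · exact ⟨rfl, rfl, rfl, Or.inr ⟨by rw [if_neg (by decide)], rfl⟩⟩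
    · rw [corner_inr_eq_inr]
      obtain rfl | rfl := fin2_cases p'
      · exact ⟨rfl, rfl, rfl, Or.inl ⟨by rw [if_pos rfl], rfl⟩⟩
      · exact ⟨rfl, rfl, rfl, Or.inr ⟨by rw [if_neg (by decide)], rfl⟩⟩

open Finset in
lemma two_mul_ecnt {V : Type*} [Fintype V] [DecidableEq V] (G : SimpleGraph V)
    [DecidableRel G.Adj] (v : V) :
    (Finset.univ.filter fun q : V × V => G.Adj v q.1 ∧ G.Adj v q.2 ∧ G.Adj q.1 q.2).card
      = 2 * (((G.neighborFinset v).powersetCard 2).filter fun s =>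
          ∃ x ∈ s, ∃ y ∈ s, G.Adj x y).card := by
  classical
  set L := Finset.univ.filter fun q : V × V => G.Adj v q.1 ∧ G.Adj v q.2 ∧ G.Adj q.1 q.2 with hL
  set R := ((G.neighborFinset v).powersetCard 2).filter fun s =>
      ∃ x ∈ s, ∃ y ∈ s, G.Adj x y with hR
  have hmap : ∀ q ∈ L, ({q.1, q.2} : Finset V) ∈ R := by
    rintro ⟨x, y⟩ hq
    simp only [hL, mem_filter, mem_univ, true_and] at hq
    obtain ⟨h1, h2, h3⟩ := hq
    simp only [hR, mem_filter, mem_powersetCard]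
    refine ⟨⟨?_, ?_⟩, x, by simp, y, by simp, h3⟩
    · intro a ha
      simp only [mem_insert, mem_singleton] at ha
      rcases ha with rfl | rfl
      · exact (G.mem_neighborFinset v a).2 h1
      · exact (G.mem_neighborFinset v a).2 h2
    · rw [card_insert_of_notMem (by simp [G.ne_of_adj h3]), card_singleton]
  rw [Finset.card_eq_sum_card_fiberwise hmap]
  rw [Finset.sum_congr rfl (g := fun _ => 2) ?_, Finset.sum_const, smul_eq_mul, mul_comm]
  intro s hs
  simp only [hR, mem_filter, mem_powersetCard] at hs
  obtain ⟨⟨hsub, hcard⟩, hex⟩ := hs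
  obtain ⟨x, y, hxy, rfl⟩ := Finset.card_eq_two.1 hcard
  have hx : G.Adj v x := (G.mem_neighborFinset v x).1 (hsub (by simp))
  have hy : G.Adj v y := (G.mem_neighborFinset v y).1 (hsub (by simp))
  have hadj : G.Adj x y := by
    obtain ⟨a, ha, b, hb, hab⟩ := hex
    simp only [mem_insert, mem_singleton] at ha hb
    rcases ha with rfl | rfl <;> rcases hb with rfl | rfl
    · exact absurd rfl (G.ne_of_adj hab)
    · exact hab
    · exact hab.symm
    · exact absurd rfl (G.ne_of_adj hab)
  have : L.filter (fun q => ({q.1, q.2} : Finset V) = {x, y}) = {(x, y), (y, x)} := by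
    ext ⟨a, b⟩
    simp only [hL, mem_filter, mem_univ, true_and, mem_insert, mem_singleton, Prod.mk.injEq]
    constructor
    · rintro ⟨⟨-, -, hab⟩, hpair⟩
      have h1 : a ∈ ({x, y} : Finset V) := hpair ▸ (by simp)
      have h2 : b ∈ ({x, y} : Finset V) := hpair ▸ (by simp)
      simp only [mem_insert, mem_singleton] at h1 h2
      rcases h1 with rfl | rfl <;> rcases h2 with rfl | rfl
      · exact absurd rfl (G.ne_of_adj hab)
      · exact Or.inl ⟨rfl, rfl⟩
      · exact Or.inr ⟨rfl, rfl⟩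
      · exact absurd rfl (G.ne_of_adj hab)
    · rintro (⟨rfl, rfl⟩ | ⟨rfl, rfl⟩)
      · exact ⟨⟨hx, hy, hadj⟩, rfl⟩
      · exact ⟨⟨hy, hx, hadj.symm⟩, by rw [Finset.pair_comm]⟩
  rw [this, Finset.card_insert_of_notMem (by simp [Prod.ext_iff]; exact fun h => absurd h hxy),
    Finset.card_singleton]

lemma vinl_eq_vinr_iff (m t : ℕ) (x : KochVertex m t) (b : KochTri m t × Fin 3 × Fin m × Fin 2) :
    ((Sum.inl x : KochVertex m (t+1)) = Sum.inr b) ↔ False :=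
  ⟨fun h => vinl_ne_vinr _ _ _ _ h, False.elim⟩

lemma vinr_eq_vinl_iff (m t : ℕ) (x : KochVertex m t) (b : KochTri m t × Fin 3 × Fin m × Fin 2) :
    ((Sum.inr b : KochVertex m (t+1)) = Sum.inl x) ↔ False :=
  ⟨fun h => vinl_ne_vinr _ _ _ _ h.symm, False.elim⟩

lemma kcnt_eq_sum (m t : ℕ) (v : KochVertex m t) :
    kcnt m t v = ∑ q : KochTri m t × Fin 3, if KochCorner m t q.1 q.2 = v then 1 else 0 := by
  rw [kcnt, Finset.card_filter]

lemma kcnt_inl (m t : ℕ) (u : KochVertex m t) :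
    kcnt m (t+1) (Sum.inl u) = (1 + m) * kcnt m t u := by
  have h : kcnt m (t+1) (Sum.inl u)
      = ∑ q : (KochTri m t ⊕ (KochTri m t × Fin 3 × Fin m)) × Fin 3,
          if KochCorner m (t+1) q.1 q.2 = Sum.inl u then 1 else 0 := by
    rw [kcnt_eq_sum]; rfl
  rw [h, Fintype.sum_prod_type, Fintype.sum_sum_type]
  have h1 : ∀ τ : KochTri m t, ∀ i : Fin 3,
      (if KochCorner m (t+1) (Sum.inl τ) i = Sum.inl u then (1:ℕ) else 0)
        = if KochCorner m t τ i = u then 1 else 0 := by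
    intro τ i; rw [corner_inl']
    by_cases hc : KochCorner m t τ i = u
    · rw [if_pos hc, if_pos (congrArg Sum.inl hc)]
    · rw [if_neg hc, if_neg (fun hh => hc (Sum.inl.inj hh))]
  have h2 : ∀ b : KochTri m t × Fin 3 × Fin m, ∀ i : Fin 3,
      (if KochCorner m (t+1) (Sum.inr b) i = Sum.inl u then (1:ℕ) else 0)
        = if i = 0 ∧ KochCorner m t b.1 b.2.1 = u then 1 else 0 := by
    rintro ⟨τ, c, g⟩ i
    by_cases hc : i = 0 ∧ KochCorner m t τ c = u
    · rw [if_pos hc, if_pos ((corner_inr_eq_inl m t τ c g i u).2 hc)]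
    · rw [if_neg hc, if_neg (fun hh => hc ((corner_inr_eq_inl m t τ c g i u).1 hh))]
  simp only [h1, h2]
  have h3 : ∀ b : KochTri m t × Fin 3 × Fin m,
      (∑ i : Fin 3, if i = 0 ∧ KochCorner m t b.1 b.2.1 = u then (1:ℕ) else 0)
        = if KochCorner m t b.1 b.2.1 = u then 1 else 0 := by
    intro b
    rw [Fin.sum_univ_three]
    by_cases hc : KochCorner m t b.1 b.2.1 = u <;> simp [hc]
  simp only [h3]
  have h4 : (∑ b : KochTri m t × Fin 3 × Fin m,
      if KochCorner m t b.1 b.2.1 = u then (1:ℕ) else 0)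
      = m * kcnt m t u := by
    rw [Fintype.sum_prod_type, kcnt_eq_sum, Fintype.sum_prod_type]
    have : ∀ τ : KochTri m t, (∑ x : Fin 3 × Fin m, if KochCorner m t τ x.1 = u then (1:ℕ) else 0)
        = m * ∑ c : Fin 3, if KochCorner m t τ c = u then 1 else 0 := by
      intro τ
      rw [Fintype.sum_prod_type, Finset.mul_sum]
      refine Finset.sum_congr rfl fun c _ => ?_
      by_cases hc : KochCorner m t τ c = u <;> simp [hc, Finset.sum_const]
    simp only [this, ← Finset.mul_sum]
  have h5 : (∑ x : KochTri m t, ∑ i : Fin 3, if KochCorner m t x i = u then (1:ℕ) else 0)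
      = kcnt m t u := by
    rw [kcnt_eq_sum, Fintype.sum_prod_type]
  rw [h5, h4]
  ring

lemma kcnt_inr (m t : ℕ) (τ : KochTri m t) (c : Fin 3) (g : Fin m) (p : Fin 2) :
    kcnt m (t+1) (Sum.inr (τ,c,g,p)) = 1 := by
  have h : kcnt m (t+1) (Sum.inr (τ,c,g,p))
      = ∑ q : (KochTri m t ⊕ (KochTri m t × Fin 3 × Fin m)) × Fin 3,
          if KochCorner m (t+1) q.1 q.2 = Sum.inr (τ,c,g,p) then 1 else 0 := by
    rw [kcnt_eq_sum]; rfl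
  rw [h, Fintype.sum_prod_type, Fintype.sum_sum_type]
  have h1 : ∀ τ0 : KochTri m t, ∀ i : Fin 3,
      (if KochCorner m (t+1) (Sum.inl τ0) i = Sum.inr (τ,c,g,p) then (1:ℕ) else 0) = 0 := by
    intro τ0 i
    rw [corner_inl']
    rw [if_neg (vinl_ne_vinr _ _ _ _)]
  have h2 : ∀ b : KochTri m t × Fin 3 × Fin m,
      (∑ i : Fin 3, if KochCorner m (t+1) (Sum.inr b) i = Sum.inr (τ,c,g,p) then (1:ℕ) else 0)
        = if b = (τ, c, g) then 1 else 0 := by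
    rintro ⟨τ0, c0, g0⟩
    have : ∀ i, (if KochCorner m (t+1) (Sum.inr (τ0,c0,g0)) i = Sum.inr (τ,c,g,p) then (1:ℕ) else 0)
        = if τ0 = τ ∧ c0 = c ∧ g0 = g ∧ ((i = 1 ∧ p = 0) ∨ (i = 2 ∧ p = 1)) then 1 else 0 :=
      fun i => by
        by_cases hc : τ0 = τ ∧ c0 = c ∧ g0 = g ∧ ((i = 1 ∧ p = 0) ∨ (i = 2 ∧ p = 1))
        · rw [if_pos hc, if_pos ((corner_inr_eq_inr ..).2 hc)]
        · rw [if_neg hc, if_neg (fun hh => hc ((corner_inr_eq_inr ..).1 hh))]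
    simp only [this]
    rw [Fin.sum_univ_three]
    obtain rfl | rfl := fin2_cases p <;>
      by_cases h0 : τ0 = τ ∧ c0 = c ∧ g0 = g <;>
      simp_all [Prod.ext_iff]
  simp only [h1, h2, Finset.sum_const_zero, zero_add]
  simp [Finset.sum_ite_eq']

lemma degree_eq_sum (m t : ℕ) (v : KochVertex m t) :
    (KochGraph m t).degree v
      = ∑ w : KochVertex m t, if (KochGraph m t).Adj v w then 1 else 0 := by
  rw [SimpleGraph.degree, SimpleGraph.neighborFinset_eq_filter, Finset.card_filter]

lemma degree_inl (m t : ℕ) (u : KochVertex m t) :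
    (KochGraph m (t+1)).degree (Sum.inl u)
      = (KochGraph m t).degree u + 2 * m * kcnt m t u := by
  have h : (KochGraph m (t+1)).degree (Sum.inl u)
      = ∑ w : KochVertex m t ⊕ (KochTri m t × Fin 3 × Fin m × Fin 2),
          if (KochGraph m (t+1)).Adj (Sum.inl u) w then 1 else 0 := by
    erw [degree_eq_sum]; rfl
  rw [h, Fintype.sum_sum_type]
  have h1 : ∀ a : KochVertex m t,
      (if (KochGraph m (t+1)).Adj (Sum.inl u) (Sum.inl a) then (1:ℕ) else 0)
        = if (KochGraph m t).Adj u a then 1 else 0 := by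
    intro a
    by_cases hc : (KochGraph m t).Adj u a
    · rw [if_pos hc, if_pos ((adj_inl_inl m t u a).2 hc)]
    · rw [if_neg hc, if_neg (fun hh => hc ((adj_inl_inl m t u a).1 hh))]
  have h2 : ∀ b : KochTri m t × Fin 3 × Fin m × Fin 2,
      (if (KochGraph m (t+1)).Adj (Sum.inl u) (Sum.inr b) then (1:ℕ) else 0)
        = if u = KochCorner m t b.1 b.2.1 then 1 else 0 := by
    rintro ⟨τ, c, g, p⟩
    by_cases hc : u = KochCorner m t τ c
    · rw [if_pos hc, if_pos ((adj_inl_inr m t u τ c g p).2 hc)]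
    · rw [if_neg hc, if_neg (fun hh => hc ((adj_inl_inr m t u τ c g p).1 hh))]
  simp only [h1, h2]
  rw [← degree_eq_sum]
  congr 1
  rw [Fintype.sum_prod_type, kcnt_eq_sum, Fintype.sum_prod_type]
  have h3 : ∀ τ : KochTri m t,
      (∑ x : Fin 3 × Fin m × Fin 2, if u = KochCorner m t τ x.1 then (1:ℕ) else 0)
        = 2 * m * ∑ c : Fin 3, if KochCorner m t τ c = u then 1 else 0 := by
    intro τ
    rw [Fintype.sum_prod_type, Finset.mul_sum]
    refine Finset.sum_congr rfl fun c _ => ?_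
    by_cases hc : KochCorner m t τ c = u
    · simp [hc, Finset.sum_const, Finset.card_univ, mul_comm]
    · rw [if_neg hc, mul_zero]
      exact Finset.sum_eq_zero fun y _ => if_neg (fun hh => hc hh.symm)
  simp only [h3, ← Finset.mul_sum]

lemma degree_inr (m t : ℕ) (τ : KochTri m t) (c : Fin 3) (g : Fin m) (p : Fin 2) :
    (KochGraph m (t+1)).degree (Sum.inr (τ,c,g,p)) = 2 := by
  have h : (KochGraph m (t+1)).degree (Sum.inr (τ,c,g,p))
      = ∑ w : KochVertex m t ⊕ (KochTri m t × Fin 3 × Fin m × Fin 2),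
          if (KochGraph m (t+1)).Adj (Sum.inr (τ,c,g,p)) w then 1 else 0 := by
    erw [degree_eq_sum]; rfl
  rw [h, Fintype.sum_sum_type]
  have h1 : ∀ a : KochVertex m t,
      (if (KochGraph m (t+1)).Adj (Sum.inr (τ,c,g,p)) (Sum.inl a) then (1:ℕ) else 0)
        = if a = KochCorner m t τ c then 1 else 0 := by
    intro a
    by_cases hc : a = KochCorner m t τ c
    · rw [if_pos hc, if_pos ((adj_inr_inl m t a τ c g p).2 hc)]
    · rw [if_neg hc, if_neg (fun hh => hc ((adj_inr_inl m t a τ c g p).1 hh))]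
  have h2 : ∀ b : KochTri m t × Fin 3 × Fin m × Fin 2,
      (if (KochGraph m (t+1)).Adj (Sum.inr (τ,c,g,p)) (Sum.inr b) then (1:ℕ) else 0)
        = if b = (τ, c, g, if p = 0 then 1 else 0) then 1 else 0 := by
    rintro ⟨τ', c', g', p'⟩
    have hiff : (KochGraph m (t+1)).Adj (Sum.inr (τ,c,g,p)) (Sum.inr (τ',c',g',p'))
        ↔ (τ', c', g', p') = (τ, c, g, if p = 0 then 1 else 0) := by
      rw [adj_inr_inr]
      constructor
      · rintro ⟨rfl, rfl, rfl, hpp⟩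
        obtain rfl | rfl := fin2_cases p <;> obtain rfl | rfl := fin2_cases p' <;>
          simp_all <;> rfl
      · rintro h
        obtain ⟨rfl, rfl, rfl, rfl⟩ : τ' = τ ∧ c' = c ∧ g' = g ∧
            p' = (if p = 0 then 1 else 0) := by simpa [Prod.ext_iff] using h
        obtain rfl | rfl := fin2_cases p <;> exact ⟨rfl, rfl, rfl, by decide⟩
    by_cases hc : (τ', c', g', p') = (τ, c, g, if p = 0 then 1 else 0)
    · rw [if_pos hc, if_pos (hiff.2 hc)]
    · rw [if_neg hc, if_neg (fun hh => hc (hiff.1 hh))]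
  simp only [h1, h2]
  rw [Finset.sum_ite_eq' Finset.univ (KochCorner m t τ c) (fun _ => 1),
    Finset.sum_ite_eq' Finset.univ ((τ, c, g, if p = 0 then 1 else 0)) (fun _ => 1)]
  simp

lemma ite_one_congr {A B : Prop} [Decidable A] [Decidable B] (h : A ↔ B) :
    (if A then (1:ℕ) else 0) = if B then 1 else 0 := by
  by_cases hb : B
  · rw [if_pos (h.2 hb), if_pos hb]
  · rw [if_neg (fun ha => hb (h.1 ha)), if_neg hb]

lemma sum_quad (m t : ℕ) (u : KochVertex m t) :
    (∑ b : KochTri m t × Fin 3 × Fin m × Fin 2,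
      if u = KochCorner m t b.1 b.2.1 then (1:ℕ) else 0) = 2 * m * kcnt m t u := by
  rw [Fintype.sum_prod_type, kcnt_eq_sum, Fintype.sum_prod_type]
  have h3 : ∀ τ : KochTri m t,
      (∑ x : Fin 3 × Fin m × Fin 2, if u = KochCorner m t τ x.1 then (1:ℕ) else 0)
        = 2 * m * ∑ c : Fin 3, if KochCorner m t τ c = u then 1 else 0 := by
    intro τ
    rw [Fintype.sum_prod_type, Finset.mul_sum]
    refine Finset.sum_congr rfl fun c _ => ?_
    by_cases hc : KochCorner m t τ c = u
    · simp [hc, Finset.sum_const, Finset.card_univ, mul_comm]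
    · rw [if_neg hc, mul_zero]
      exact Finset.sum_eq_zero fun y _ => if_neg (fun hh => hc hh.symm)
  simp only [h3, ← Finset.mul_sum]

lemma dcnt_eq_sum (m t : ℕ) (v : KochVertex m t) :
    dcnt m t v = ∑ q : KochVertex m t × KochVertex m t,
      if (KochGraph m t).Adj v q.1 ∧ (KochGraph m t).Adj v q.2 ∧ (KochGraph m t).Adj q.1 q.2
      then 1 else 0 := by
  rw [dcnt, Finset.card_filter]

lemma dcnt_inl (m t : ℕ) (u : KochVertex m t) :
    dcnt m (t+1) (Sum.inl u) = dcnt m t u + 2 * m * kcnt m t u := by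
  set G := KochGraph m (t+1)
  have h : dcnt m (t+1) (Sum.inl u)
      = ∑ q : (KochVertex m t ⊕ (KochTri m t × Fin 3 × Fin m × Fin 2))
            × (KochVertex m t ⊕ (KochTri m t × Fin 3 × Fin m × Fin 2)),
          if G.Adj (Sum.inl u) q.1 ∧ G.Adj (Sum.inl u) q.2 ∧ G.Adj q.1 q.2
          then 1 else 0 := by
    rw [dcnt_eq_sum]; rfl
  rw [h, Fintype.sum_prod_type, Fintype.sum_sum_type]
  simp only [Fintype.sum_sum_type]
  have S11 : (∑ a : KochVertex m t, ∑ b : KochVertex m t,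
      if G.Adj (Sum.inl u) (Sum.inl a) ∧ G.Adj (Sum.inl u) (Sum.inl b)
        ∧ G.Adj (Sum.inl a) (Sum.inl b) then (1:ℕ) else 0) = dcnt m t u := by
    rw [dcnt_eq_sum, Fintype.sum_prod_type]
    exact Finset.sum_congr rfl fun a _ => Finset.sum_congr rfl fun b _ =>
      ite_one_congr (and_congr (adj_inl_inl ..) (and_congr (adj_inl_inl ..) (adj_inl_inl ..)))
  have S12 : (∑ a : KochVertex m t, ∑ b : KochTri m t × Fin 3 × Fin m × Fin 2,
      if G.Adj (Sum.inl u) (Sum.inl a) ∧ G.Adj (Sum.inl u) (Sum.inr b)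
        ∧ G.Adj (Sum.inl a) (Sum.inr b) then (1:ℕ) else 0) = 0 := by
    refine Finset.sum_eq_zero fun a _ => Finset.sum_eq_zero fun b _ => if_neg ?_
    obtain ⟨τ, c, g, p⟩ := b
    rintro ⟨h1, h2, h3⟩
    rw [adj_inl_inl] at h1
    rw [adj_inl_inr] at h2 h3
    rw [h2, ← h3] at h1
    exact (KochGraph m t).loopless.irrefl a h1
  have S21 : (∑ b : KochTri m t × Fin 3 × Fin m × Fin 2, ∑ a : KochVertex m t,
      if G.Adj (Sum.inl u) (Sum.inr b) ∧ G.Adj (Sum.inl u) (Sum.inl a)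
        ∧ G.Adj (Sum.inr b) (Sum.inl a) then (1:ℕ) else 0) = 0 := by
    refine Finset.sum_eq_zero fun b _ => Finset.sum_eq_zero fun a _ => if_neg ?_
    obtain ⟨τ, c, g, p⟩ := b
    rintro ⟨h1, h2, h3⟩
    rw [adj_inl_inl] at h2
    rw [adj_inl_inr] at h1
    rw [adj_inr_inl] at h3
    rw [h1, ← h3] at h2
    exact (KochGraph m t).loopless.irrefl a h2
  have S22 : (∑ b : KochTri m t × Fin 3 × Fin m × Fin 2,
      ∑ b' : KochTri m t × Fin 3 × Fin m × Fin 2,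
      if G.Adj (Sum.inl u) (Sum.inr b) ∧ G.Adj (Sum.inl u) (Sum.inr b')
        ∧ G.Adj (Sum.inr b) (Sum.inr b') then (1:ℕ) else 0) = 2 * m * kcnt m t u := by
    rw [← sum_quad m t u]
    refine Finset.sum_congr rfl fun b _ => ?_
    obtain ⟨τ, c, g, p⟩ := b
    have key : ∀ b' : KochTri m t × Fin 3 × Fin m × Fin 2,
        (G.Adj (Sum.inl u) (Sum.inr (τ,c,g,p)) ∧ G.Adj (Sum.inl u) (Sum.inr b')
          ∧ G.Adj (Sum.inr (τ,c,g,p)) (Sum.inr b'))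
        ↔ (u = KochCorner m t τ c ∧ b' = (τ, c, g, if p = 0 then 1 else 0)) := by
      rintro ⟨τ', c', g', p'⟩
      rw [adj_inl_inr, adj_inl_inr, adj_inr_inr]
      constructor
      · rintro ⟨h1, h2, rfl, rfl, rfl, hpp⟩
        refine ⟨h1, ?_⟩
        obtain rfl | rfl := fin2_cases p <;> obtain rfl | rfl := fin2_cases p' <;>
          simp_all <;> rfl
      · rintro ⟨h1, h2⟩
        obtain ⟨rfl, rfl, rfl, rfl⟩ : τ' = τ ∧ c' = c ∧ g' = g ∧
            p' = (if p = 0 then 1 else 0) := by simpa [Prod.ext_iff] using h2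
        exact ⟨h1, h1, rfl, rfl, rfl, by obtain rfl | rfl := fin2_cases p <;> decide⟩
    calc (∑ b' : KochTri m t × Fin 3 × Fin m × Fin 2,
        if G.Adj (Sum.inl u) (Sum.inr (τ,c,g,p)) ∧ G.Adj (Sum.inl u) (Sum.inr b')
          ∧ G.Adj (Sum.inr (τ,c,g,p)) (Sum.inr b') then (1:ℕ) else 0)
        = ∑ b' : KochTri m t × Fin 3 × Fin m × Fin 2,
            if u = KochCorner m t τ c ∧ b' = (τ, c, g, if p = 0 then 1 else 0)
            then 1 else 0 :=
          Finset.sum_congr rfl fun b' _ => ite_one_congr (key b')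
      _ = if u = KochCorner m t τ c then 1 else 0 := by
          by_cases hc : u = KochCorner m t τ c
          · simp [hc, Finset.sum_ite_eq']
          · simp [hc]
  rw [Finset.sum_add_distrib, Finset.sum_add_distrib, S11, S12, S21, S22]
  ring

lemma dcnt_inr (m t : ℕ) (τ : KochTri m t) (c : Fin 3) (g : Fin m) (p : Fin 2) :
    dcnt m (t+1) (Sum.inr (τ,c,g,p)) = 2 := by
  set G := KochGraph m (t+1)
  set v : KochVertex m (t+1) := Sum.inr (τ,c,g,p) with hv
  set b0 : KochTri m t × Fin 3 × Fin m × Fin 2 := (τ, c, g, if p = 0 then 1 else 0) with hb0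
  have hadjinl : ∀ a : KochVertex m t, G.Adj v (Sum.inl a) ↔ a = KochCorner m t τ c :=
    fun a => adj_inr_inl ..
  have hadjinr : ∀ b' : KochTri m t × Fin 3 × Fin m × Fin 2,
      G.Adj v (Sum.inr b') ↔ b' = b0 := by
    rintro ⟨τ', c', g', p'⟩
    rw [hv, adj_inr_inr]
    constructor
    · rintro ⟨rfl, rfl, rfl, hpp⟩
      obtain rfl | rfl := fin2_cases p <;> obtain rfl | rfl := fin2_cases p' <;>
        simp_all [hb0] <;> rfl
    · rintro h
      obtain ⟨rfl, rfl, rfl, rfl⟩ : τ' = τ ∧ c' = c ∧ g' = g ∧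
          p' = (if p = 0 then 1 else 0) := by simpa [hb0, Prod.ext_iff] using h
      exact ⟨rfl, rfl, rfl, by obtain rfl | rfl := fin2_cases p <;> decide⟩
  have h : dcnt m (t+1) v
      = ∑ q : (KochVertex m t ⊕ (KochTri m t × Fin 3 × Fin m × Fin 2))
            × (KochVertex m t ⊕ (KochTri m t × Fin 3 × Fin m × Fin 2)),
          if G.Adj v q.1 ∧ G.Adj v q.2 ∧ G.Adj q.1 q.2 then 1 else 0 := by
    rw [dcnt_eq_sum]; rfl
  rw [h, Fintype.sum_prod_type, Fintype.sum_sum_type]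
  simp only [Fintype.sum_sum_type]
  have S11 : (∑ a : KochVertex m t, ∑ b : KochVertex m t,
      if G.Adj v (Sum.inl a) ∧ G.Adj v (Sum.inl b) ∧ G.Adj (Sum.inl a) (Sum.inl b)
      then (1:ℕ) else 0) = 0 := by
    refine Finset.sum_eq_zero fun a _ => Finset.sum_eq_zero fun b _ => if_neg ?_
    rintro ⟨h1, h2, h3⟩
    rw [hadjinl] at h1 h2
    rw [adj_inl_inl] at h3
    rw [h1, ← h2] at h3
    exact (KochGraph m t).loopless.irrefl b h3
  have S12 : (∑ a : KochVertex m t, ∑ b' : KochTri m t × Fin 3 × Fin m × Fin 2,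
      if G.Adj v (Sum.inl a) ∧ G.Adj v (Sum.inr b') ∧ G.Adj (Sum.inl a) (Sum.inr b')
      then (1:ℕ) else 0) = 1 := by
    have key : ∀ (a : KochVertex m t) (b' : KochTri m t × Fin 3 × Fin m × Fin 2),
        (G.Adj v (Sum.inl a) ∧ G.Adj v (Sum.inr b') ∧ G.Adj (Sum.inl a) (Sum.inr b'))
          ↔ (a = KochCorner m t τ c ∧ b' = b0) := by
      rintro a ⟨τ', c', g', p'⟩
      rw [hadjinl, hadjinr, adj_inl_inr]
      constructor
      · rintro ⟨h1, h2, -⟩; exact ⟨h1, h2⟩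
      · rintro ⟨rfl, h2⟩
        refine ⟨rfl, h2, ?_⟩
        obtain ⟨rfl, rfl, rfl, rfl⟩ : τ' = τ ∧ c' = c ∧ g' = g ∧
            p' = (if p = 0 then 1 else 0) := by simpa [hb0, Prod.ext_iff] using h2
        rfl
    calc (∑ a : KochVertex m t, ∑ b' : KochTri m t × Fin 3 × Fin m × Fin 2,
        if G.Adj v (Sum.inl a) ∧ G.Adj v (Sum.inr b') ∧ G.Adj (Sum.inl a) (Sum.inr b')
        then (1:ℕ) else 0)
        = ∑ a : KochVertex m t, ∑ b' : KochTri m t × Fin 3 × Fin m × Fin 2,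
            if a = KochCorner m t τ c ∧ b' = b0 then 1 else 0 :=
          Finset.sum_congr rfl fun a _ => Finset.sum_congr rfl fun b' _ =>
            ite_one_congr (key a b')
      _ = 1 := by
          have inner : ∀ a : KochVertex m t,
              (∑ b' : KochTri m t × Fin 3 × Fin m × Fin 2,
                if a = KochCorner m t τ c ∧ b' = b0 then (1:ℕ) else 0)
                = if a = KochCorner m t τ c then 1 else 0 := by
            intro a
            by_cases ha : a = KochCorner m t τ c
            · simp [ha, Finset.sum_ite_eq']
            · simp [ha]
          simp only [inner]
          simp [Finset.sum_ite_eq']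
  have S21 : (∑ b' : KochTri m t × Fin 3 × Fin m × Fin 2, ∑ a : KochVertex m t,
      if G.Adj v (Sum.inr b') ∧ G.Adj v (Sum.inl a) ∧ G.Adj (Sum.inr b') (Sum.inl a)
      then (1:ℕ) else 0) = 1 := by
    have key : ∀ (b' : KochTri m t × Fin 3 × Fin m × Fin 2) (a : KochVertex m t),
        (G.Adj v (Sum.inr b') ∧ G.Adj v (Sum.inl a) ∧ G.Adj (Sum.inr b') (Sum.inl a))
          ↔ (b' = b0 ∧ a = KochCorner m t τ c) := by
      rintro ⟨τ', c', g', p'⟩ a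
      rw [hadjinl, hadjinr, adj_inr_inl]
      constructor
      · rintro ⟨h1, h2, -⟩; exact ⟨h1, h2⟩
      · rintro ⟨h1, rfl⟩
        refine ⟨h1, rfl, ?_⟩
        obtain ⟨rfl, rfl, rfl, rfl⟩ : τ' = τ ∧ c' = c ∧ g' = g ∧
            p' = (if p = 0 then 1 else 0) := by simpa [hb0, Prod.ext_iff] using h1
        rfl
    calc (∑ b' : KochTri m t × Fin 3 × Fin m × Fin 2, ∑ a : KochVertex m t,
        if G.Adj v (Sum.inr b') ∧ G.Adj v (Sum.inl a) ∧ G.Adj (Sum.inr b') (Sum.inl a)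
        then (1:ℕ) else 0)
        = ∑ b' : KochTri m t × Fin 3 × Fin m × Fin 2, ∑ a : KochVertex m t,
            if b' = b0 ∧ a = KochCorner m t τ c then 1 else 0 :=
          Finset.sum_congr rfl fun b' _ => Finset.sum_congr rfl fun a _ =>
            ite_one_congr (key b' a)
      _ = 1 := by
          have inner : ∀ b' : KochTri m t × Fin 3 × Fin m × Fin 2,
              (∑ a : KochVertex m t, if b' = b0 ∧ a = KochCorner m t τ c then (1:ℕ) else 0)
                = if b' = b0 then 1 else 0 := by
            intro b'
            by_cases hb : b' = b0
            · simp [hb, Finset.sum_ite_eq']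
            · simp [hb]
          simp only [inner]
          simp [Finset.sum_ite_eq']
  have S22 : (∑ b : KochTri m t × Fin 3 × Fin m × Fin 2,
      ∑ b' : KochTri m t × Fin 3 × Fin m × Fin 2,
      if G.Adj v (Sum.inr b) ∧ G.Adj v (Sum.inr b') ∧ G.Adj (Sum.inr b) (Sum.inr b')
      then (1:ℕ) else 0) = 0 := by
    refine Finset.sum_eq_zero fun b _ => Finset.sum_eq_zero fun b' _ => if_neg ?_
    rintro ⟨h1, h2, h3⟩
    rw [hadjinr] at h1 h2
    subst h1; subst h2
    obtain ⟨-, -, -, hpp⟩ := (adj_inr_inr ..).1 h3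
    exact hpp rfl
  rw [Finset.sum_add_distrib, Finset.sum_add_distrib, S11, S12, S21, S22]
  norm_num

lemma koch_main (m t : ℕ) : ∀ v : KochVertex m t,
    (KochGraph m t).degree v = 2 * kcnt m t v ∧ dcnt m t v = 2 * kcnt m t v
      ∧ 1 ≤ kcnt m t v := by
  induction t with
  | zero =>
    intro v
    erw [deg0, kcnt0, dcnt0]
    exact ⟨rfl, rfl, le_refl 1⟩
  | succ t ih =>
    intro v
    match v with
    | Sum.inl u =>
      obtain ⟨h1, h2, h3⟩ := ih u
      refine ⟨?_, ?_, ?_⟩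
      · erw [degree_inl, kcnt_inl, h1]; ring
      · rw [dcnt_inl, kcnt_inl, h2]; ring
      · rw [kcnt_inl]
        exact Nat.one_le_iff_ne_zero.2 (Nat.mul_ne_zero (by omega) (by omega))
    | Sum.inr (τ, c, g, p) =>
      erw [degree_inr, dcnt_inr, kcnt_inr]
      exact ⟨rfl, rfl, le_refl 1⟩


/-- For all integers m ≥ 1 and t ≥ 0, every vertex of the Koch network `K_{m,t}`
of degree k has local clustering coefficient exactly `1/(k-1)`: the number of edges among its
k neighbors equals `k/2` (stated as twice that number equals `k`), so that `(k/2)` divided by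
`k(k-1)/2` equals `1/(k-1)`. -/
theorem koch_clustering (m t : ℕ) (hm : 1 ≤ m) (v : KochVertex m t) :
    2 * ((((KochGraph m t).neighborFinset v).powersetCard 2).filter fun s =>
          ∃ x ∈ s, ∃ y ∈ s, (KochGraph m t).Adj x y).card = (KochGraph m t).degree v
    ∧ (((((KochGraph m t).neighborFinset v).powersetCard 2).filter fun s =>
          ∃ x ∈ s, ∃ y ∈ s, (KochGraph m t).Adj x y).card : ℝ) /
        (((KochGraph m t).degree v : ℝ) * (((KochGraph m t).degree v : ℝ) - 1) / 2)
      = 1 / (((KochGraph m t).degree v : ℝ) - 1) := by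
  obtain ⟨h1, h2, h3⟩ := koch_main m t v
  have hE : dcnt m t v
      = 2 * ((((KochGraph m t).neighborFinset v).powersetCard 2).filter fun s =>
          ∃ x ∈ s, ∃ y ∈ s, (KochGraph m t).Adj x y).card := by
    rw [dcnt]; exact two_mul_ecnt (KochGraph m t) v
  have hEk : ((((KochGraph m t).neighborFinset v).powersetCard 2).filter fun s =>
      ∃ x ∈ s, ∃ y ∈ s, (KochGraph m t).Adj x y).card = kcnt m t v := by omega
  constructor
  · omega
  · rw [hEk, h1]
    have hk : (1:ℝ) ≤ (kcnt m t v : ℝ) := by exact_mod_cast h3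
    set K : ℝ := (kcnt m t v : ℝ) with hK
    push_cast
    have hK0 : K ≠ 0 := by linarith
    have hK1 : 2 * K - 1 ≠ 0 := by intro h; nlinarith
    rw [show (2*K*(2*K-1)/2 : ℝ) = K*(2*K-1) by ring,
      div_eq_div_iff (mul_ne_zero hK0 hK1) hK1]
    ring
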